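/- For every integer k ≥ 1, the minimum of the dominator chromatic number χ_d(D) over all orientations D of the path P_{4k+3} equals k+3. -/

import Mathlib

/-- A vertex `v` dominates the color class of color `a` under coloring `c`:
the class is nonempty and every vertex of that color is an out-neighbor of `v`. -/
def Dominates {V α : Type*} (A : V → V → Prop) (c : V → α) (v : V) (a : α) : Prop :=
  (∃ w, c w = a) ∧ ∀ w, c w = a → A v w

/-- A dominator coloring of the digraph with arc relation `A`: a proper coloring
such that every vertex with positive out-degree dominates some color class. -/
def IsDominatorColoring {V α : Type*} (A : V → V → Prop) (c : V → α) : Prop :=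
  (∀ u v, A u v → c u ≠ c v) ∧ ∀ v, (∃ w, A v w) → ∃ a, Dominates A c v a

/-- The dominator chromatic number: the least `k` admitting a dominator coloring
with colors in `Fin k`. -/
noncomputable def domChrom {V : Type*} (A : V → V → Prop) : ℕ :=
  sInf {k | ∃ c : V → Fin k, IsDominatorColoring A c}

/-- The arc relation of the orientation of the path `P_n` (vertices `0,…,n-1`)
determined by `o`: the edge between `i` and `i+1` is directed `i → i+1`
when `o i = true` and `i+1 → i` when `o i = false`. -/
def pathArc (n : ℕ) (o : ℕ → Bool) (u v : Fin n) : Prop :=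
  ((u : ℕ) + 1 = (v : ℕ) ∧ o u = true) ∨ ((v : ℕ) + 1 = (u : ℕ) ∧ o v = false)

/-- The minimum of the dominator chromatic number over all orientations of `P_n`. -/
noncomputable def minDomChromPath (n : ℕ) : ℕ :=
  sInf {m | ∃ o : ℕ → Bool, m = domChrom (pathArc n o)}

private lemma pathArc_total {n : ℕ} (o : ℕ → Bool) (u v : Fin n) (h : (u : ℕ) + 1 = (v : ℕ)) :
    pathArc n o u v ∨ pathArc n o v u := by
  cases hov : o (u : ℕ) with
  | true => exact Or.inl (Or.inl ⟨h, hov⟩)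
  | false => exact Or.inr (Or.inr ⟨h, hov⟩)

private lemma pathArc_shape {n : ℕ} (o : ℕ → Bool) (u v : Fin n) (h : pathArc n o u v) :
    (u : ℕ) + 1 = (v : ℕ) ∨ (v : ℕ) + 1 = (u : ℕ) := by
  rcases h with ⟨h, -⟩ | ⟨h, -⟩
  · exact Or.inl h
  · exact Or.inr h

open Finset in
private lemma indep_card_le {k : ℕ} {s : Finset (Fin (4 * k + 3))}
    (hs : ∀ u ∈ s, ∀ v ∈ s, (u : ℕ) + 1 ≠ (v : ℕ)) : s.card ≤ 2 * k + 2 := by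
  have h := Finset.card_le_card_of_injOn (fun v : Fin (4 * k + 3) => (v : ℕ) / 2)
    (t := Finset.range (2 * k + 2))
    (fun a _ => by have := a.isLt; simp only [Finset.mem_coe, Finset.mem_range]; omega)
    (by
      intro u hu v hv h
      simp only [Finset.mem_coe] at hu hv
      have h' : (u : ℕ) / 2 = (v : ℕ) / 2 := h
      have h1 := hs u hu v hv
      have h2 := hs v hv u hu
      exact Fin.val_injective (by omega))
  simpa using h

open Finset in
private lemma indep_card_le_odd {k : ℕ} {s : Finset (Fin (4 * k + 3))}
    (hs : ∀ u ∈ s, ∀ v ∈ s, (u : ℕ) + 1 ≠ (v : ℕ)) {w : Fin (4 * k + 3)}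
    (hw : w ∈ s) (hodd : (w : ℕ) % 2 = 1) : s.card ≤ 2 * k + 1 := by
  classical
  have hwlt := w.isLt
  have hsplit := Finset.card_filter_add_card_filter_not
    (s := s) (p := fun v : Fin (4 * k + 3) => (v : ℕ) < (w : ℕ))
  have h1 : (s.filter (fun v : Fin (4 * k + 3) => (v : ℕ) < (w : ℕ))).card ≤ (w : ℕ) / 2 := by
    have h := Finset.card_le_card_of_injOn
      (s := s.filter (fun v : Fin (4 * k + 3) => (v : ℕ) < (w : ℕ)))
      (fun v : Fin (4 * k + 3) => (v : ℕ) / 2)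
      (t := Finset.range ((w : ℕ) / 2))
      (fun a ha => by
        have ha' := Finset.mem_filter.mp ha
        have hne := hs a ha'.1 w hw
        have h2 := ha'.2
        simp only [Finset.mem_coe, Finset.mem_range]
        omega)
      (by
        intro u hu v hv h
        simp only [Finset.coe_filter, Set.mem_setOf_eq] at hu hv
        have h' : (u : ℕ) / 2 = (v : ℕ) / 2 := h
        have h1 := hs u hu.1 v hv.1
        have h2 := hs v hv.1 u hu.1
        exact Fin.val_injective (by omega))
    simpa using h
  have h2 : (s.filter (fun v : Fin (4 * k + 3) => ¬ (v : ℕ) < (w : ℕ))).card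
      ≤ 2 * k + 1 - (w : ℕ) / 2 := by
    have h := Finset.card_le_card_of_injOn
      (s := s.filter (fun v : Fin (4 * k + 3) => ¬ (v : ℕ) < (w : ℕ)))
      (fun v : Fin (4 * k + 3) => ((v : ℕ) - (w : ℕ)) / 2)
      (t := Finset.range (2 * k + 1 - (w : ℕ) / 2))
      (fun a ha => by
        have ha' := Finset.mem_filter.mp ha
        have halt := a.isLt
        have h2 := ha'.2
        simp only [Finset.mem_coe, Finset.mem_range]
        omega)
      (by
        intro u hu v hv h
        simp only [Finset.coe_filter, Set.mem_setOf_eq] at hu hv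
        have h' : ((u : ℕ) - (w : ℕ)) / 2 = ((v : ℕ) - (w : ℕ)) / 2 := h
        have h1 := hs u hu.1 v hv.1
        have h2 := hs v hv.1 u hu.1
        have hu2 := hu.2
        have hv2 := hv.2
        exact Fin.val_injective (by omega))
    simpa using h
  omega

open Finset in
private lemma abstract_lb {k m : ℕ} (hk : 1 ≤ k) (hm : m ≤ k + 2)
    {A : Fin (4 * k + 3) → Fin (4 * k + 3) → Prop}
    (harc : ∀ u v : Fin (4 * k + 3), (u : ℕ) + 1 = (v : ℕ) → A u v ∨ A v u)
    (hshape : ∀ u v : Fin (4 * k + 3), A u v → (u : ℕ) + 1 = (v : ℕ) ∨ (v : ℕ) + 1 = (u : ℕ))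
    (c : Fin (4 * k + 3) → Fin m) (hc : IsDominatorColoring A c) : False := by
  classical
  -- color classes
  set cls : Fin m → Finset (Fin (4 * k + 3)) :=
    fun a => univ.filter (fun w => c w = a) with hcls
  have hmemcls : ∀ (w : Fin (4 * k + 3)) (a : Fin m), w ∈ cls a ↔ c w = a := by
    intro w a; simp [hcls]
  -- dominated classes have between 1 and 2 members
  have hcls2 : ∀ (a : Fin m) (v), Dominates A c v a → (cls a).card ≤ 2 := by
    intro a v hv
    by_contra h
    push_neg at h
    obtain ⟨x, y, z, hx, hy, hz, hxy, hxz, hyz⟩ := Finset.two_lt_card_iff.mp h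
    have sx := hshape v x (hv.2 x ((hmemcls x a).mp hx))
    have sy := hshape v y (hv.2 y ((hmemcls y a).mp hy))
    have sz := hshape v z (hv.2 z ((hmemcls z a).mp hz))
    have nxy : (x : ℕ) ≠ (y : ℕ) := fun h' => hxy (Fin.val_injective h')
    have nxz : (x : ℕ) ≠ (z : ℕ) := fun h' => hxz (Fin.val_injective h')
    have nyz : (y : ℕ) ≠ (z : ℕ) := fun h' => hyz (Fin.val_injective h')
    omega
  have hcls1 : ∀ (a : Fin m) (v), Dominates A c v a → 1 ≤ (cls a).card := by
    intro a v hv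
    obtain ⟨w, hw⟩ := hv.1
    exact Finset.card_pos.mpr ⟨w, (hmemcls w a).mpr hw⟩
  -- dominated colors
  set D : Finset (Fin m) := univ.filter (fun a => ∃ v, Dominates A c v a) with hD
  have hmemD : ∀ a : Fin m, a ∈ D ↔ ∃ v, Dominates A c v a := by intro a; simp [hD]
  -- vertices carrying a dominated color
  set VD : Finset (Fin (4 * k + 3)) := univ.filter (fun w => c w ∈ D) with hVD
  have hVDbi : VD = D.biUnion cls := by
    ext w
    simp only [hVD, mem_filter, mem_univ, true_and, mem_biUnion]
    constructor
    · intro h; exact ⟨c w, h, (hmemcls w (c w)).mpr rfl⟩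
    · rintro ⟨a, haD, hwa⟩
      exact ((hmemcls w a).mp hwa) ▸ haD
  have hdisj : ∀ a ∈ D, ∀ b ∈ D, a ≠ b → Disjoint (cls a) (cls b) := by
    intro a _ b _ hab
    refine Finset.disjoint_left.mpr ?_
    intro w hwa hwb
    exact hab (by rw [← (hmemcls w a).mp hwa, (hmemcls w b).mp hwb])
  have hcardVD : VD.card = ∑ a ∈ D, (cls a).card := by
    rw [hVDbi]; exact Finset.card_biUnion hdisj
  -- p2 : number of dominated colors with a class of size two
  set p2 : ℕ := (D.filter (fun a => (cls a).card = 2)).card with hp2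
  have hp2le : p2 ≤ D.card := Finset.card_filter_le _ _
  have hsum : ∑ a ∈ D, (cls a).card = D.card + p2 := by
    rw [← Finset.sum_filter_add_sum_filter_not D (fun a => (cls a).card = 2)]
    have e1 : ∑ a ∈ D.filter (fun a => (cls a).card = 2), (cls a).card
        = 2 * (D.filter (fun a => (cls a).card = 2)).card := by
      rw [Finset.sum_congr rfl (fun a ha => (Finset.mem_filter.mp ha).2)]
      rw [Finset.sum_const, smul_eq_mul, mul_comm]
    have e2 : ∑ a ∈ D.filter (fun a => ¬ (cls a).card = 2), (cls a).card
        = (D.filter (fun a => ¬ (cls a).card = 2)).card := by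
      rw [Finset.sum_congr rfl (fun a ha => ?_), Finset.sum_const, smul_eq_mul, mul_one]
      have h1 := Finset.mem_filter.mp ha
      obtain ⟨v, hv⟩ := (hmemD a).mp h1.1
      have g1 := hcls1 a v hv
      have g2 := hcls2 a v hv
      have g3 := h1.2
      omega
    have hsplit := Finset.card_filter_add_card_filter_not
      (s := D) (p := fun a => (cls a).card = 2)
    rw [e1, e2]
    omega
  -- D is not everything : there is a color outside D
  have hDle : D.card ≤ m := by
    have := Finset.card_le_card (Finset.subset_univ D)
    simpa using this
  have hVDle : VD.card ≤ 2 * D.card := by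
    rw [hcardVD]
    calc ∑ a ∈ D, (cls a).card ≤ ∑ _a ∈ D, 2 := by
          refine Finset.sum_le_sum (fun a ha => ?_)
          obtain ⟨v, hv⟩ := (hmemD a).mp ha
          exact hcls2 a v hv
      _ = 2 * D.card := by rw [Finset.sum_const, smul_eq_mul, mul_comm]
  have hex_b : ∃ u : Fin (4 * k + 3), c u ∉ D := by
    by_contra h
    push_neg at h
    have hsub : (univ : Finset (Fin (4 * k + 3))).card ≤ VD.card :=
      Finset.card_le_card (fun w _ => Finset.mem_filter.mpr ⟨Finset.mem_univ w, h w⟩)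
    simp only [Finset.card_univ, Fintype.card_fin] at hsub
    omega
  obtain ⟨u0, hb0⟩ := hex_b
  -- lower bound on the number of dominated colors
  have hpair : ∀ j : Fin (2 * k + 1), ∃ v : Fin (4 * k + 3),
      ((v : ℕ) = 2 * (j : ℕ) ∨ (v : ℕ) = 2 * (j : ℕ) + 1) ∧ ∃ w, A v w := by
    intro j
    have hj := j.isLt
    have h1 : (2 * (j : ℕ)) < 4 * k + 3 := by omega
    have h2 : (2 * (j : ℕ) + 1) < 4 * k + 3 := by omega
    rcases harc ⟨2 * (j : ℕ), h1⟩ ⟨2 * (j : ℕ) + 1, h2⟩ rfl with h | h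
    · exact ⟨⟨2 * (j : ℕ), h1⟩, Or.inl rfl, ⟨2 * (j : ℕ) + 1, h2⟩, h⟩
    · exact ⟨⟨2 * (j : ℕ) + 1, h2⟩, Or.inr rfl, ⟨2 * (j : ℕ), h1⟩, h⟩
  choose d hdval hdout using hpair
  choose a haDom using fun j => hc.2 (d j) (hdout j)
  have haD : ∀ j, a j ∈ D := fun j => (hmemD (a j)).mpr ⟨d j, haDom j⟩
  have hfib : ∀ α : Fin m,
      ((univ : Finset (Fin (2 * k + 1))).filter (fun j => a j = α)).card ≤ 2 := by
    intro α
    by_contra h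
    push_neg at h
    obtain ⟨j1, j2, j3, h1, h2, h3, h12, h13, h23⟩ := Finset.two_lt_card_iff.mp h
    simp only [Finset.mem_filter, Finset.mem_univ, true_and] at h1 h2 h3
    have D1 : Dominates A c (d j1) α := h1 ▸ haDom j1
    have D2 : Dominates A c (d j2) α := h2 ▸ haDom j2
    have D3 : Dominates A c (d j3) α := h3 ▸ haDom j3
    obtain ⟨w, hw⟩ := D1.1
    have s1 := hshape (d j1) w (D1.2 w hw)
    have s2 := hshape (d j2) w (D2.2 w hw)
    have s3 := hshape (d j3) w (D3.2 w hw)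
    have e1 := hdval j1
    have e2 := hdval j2
    have e3 := hdval j3
    have n12 : (j1 : ℕ) ≠ (j2 : ℕ) := fun h' => h12 (Fin.val_injective h')
    have n13 : (j1 : ℕ) ≠ (j3 : ℕ) := fun h' => h13 (Fin.val_injective h')
    have n23 : (j2 : ℕ) ≠ (j3 : ℕ) := fun h' => h23 (Fin.val_injective h')
    omega
  have hDlb : 2 * k + 1 ≤ 2 * D.card := by
    have hmap : ∀ j : Fin (2 * k + 1), j ∈ (univ : Finset (Fin (2 * k + 1))) → a j ∈ D :=
      fun j _ => haD j
    have hcnt := Finset.card_eq_sum_card_fiberwise hmap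
    simp only [Finset.card_univ, Fintype.card_fin] at hcnt
    have hle : ∑ α ∈ D, ((univ : Finset (Fin (2 * k + 1))).filter (fun j => a j = α)).card
        ≤ ∑ _α ∈ D, 2 := Finset.sum_le_sum (fun α _ => hfib α)
    rw [Finset.sum_const, smul_eq_mul] at hle
    omega
  -- D has exactly k+1 elements and m = k+2
  have hins : D.card + 1 ≤ m := by
    have h1 : (insert (c u0) D).card ≤ m := by
      have := Finset.card_le_card (Finset.subset_univ (insert (c u0) D))
      simpa using this
    rw [Finset.card_insert_of_notMem hb0] at h1
    omega
  have hDcard : D.card = k + 1 := by omega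
  have hmeq : m = k + 2 := by omega
  -- the unique color outside D
  have hbuniq : ∀ x : Fin m, x ∉ D → x = c u0 := by
    intro x hx
    have hcompl : ((univ : Finset (Fin m)) \ D).card = 1 := by
      rw [Finset.card_sdiff_of_subset (Finset.subset_univ D)]
      simp only [Finset.card_univ, Fintype.card_fin]
      omega
    exact Finset.card_le_one.mp (le_of_eq hcompl) x
      (Finset.mem_sdiff.mpr ⟨Finset.mem_univ x, hx⟩) (c u0)
      (Finset.mem_sdiff.mpr ⟨Finset.mem_univ _, hb0⟩)
  -- the class of the color outside D
  set B : Finset (Fin (4 * k + 3)) := cls (c u0) with hB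
  have hBmem : ∀ w, w ∈ B ↔ c w ∉ D := by
    intro w
    rw [hB]
    constructor
    · intro h
      rw [(hmemcls w (c u0)).mp h]
      exact hb0
    · intro h
      exact (hmemcls w (c u0)).mpr (hbuniq (c w) h)
  have hBcompl : B = univ \ VD := by
    ext w
    rw [Finset.mem_sdiff, hBmem w]
    simp only [Finset.mem_univ, true_and, hVD, Finset.mem_filter]
  have hcardsplit : VD.card + B.card = 4 * k + 3 := by
    have hvd := Finset.card_le_card (Finset.subset_univ VD)
    rw [hBcompl, Finset.card_sdiff_of_subset (Finset.subset_univ VD)]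
    simp only [Finset.card_univ, Fintype.card_fin] at hvd ⊢
    omega
  -- nonsinks
  set N : Finset (Fin (4 * k + 3)) := univ.filter (fun v => ∃ w, A v w) with hN
  have hmemN : ∀ v, v ∈ N ↔ ∃ w, A v w := by intro v; simp [hN]
  have hchoice : ∀ v : Fin (4 * k + 3), ∃ α : Fin m,
      v ∈ N → (α ∈ D ∧ Dominates A c v α) := by
    intro v
    by_cases hv : v ∈ N
    · obtain ⟨α, hα⟩ := hc.2 v ((hmemN v).mp hv)
      refine ⟨α, fun _ => ⟨?_, hα⟩⟩
      by_contra hαD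
      have heq := hbuniq α hαD
      rw [heq] at hα
      have hBc : B.card ≤ 2 := hcls2 (c u0) v hα
      omega
    · exact ⟨c u0, fun h => absurd h hv⟩
  choose g hg using hchoice
  have hNsum := Finset.card_eq_sum_card_fiberwise (s := N) (t := D) (f := g)
    (fun v hv => (hg v hv).1)
  have hfibN : ∀ α ∈ D, (N.filter (fun v => g v = α)).card
      ≤ if (cls α).card = 2 then 1 else 2 := by
    intro α hαD
    split_ifs with h2c
    · rw [Finset.card_le_one]
      intro v hv v' hv'
      rw [Finset.mem_filter] at hv hv'
      obtain ⟨x, hx, y, hy, hxy⟩ := Finset.one_lt_card.mp (by omega : 1 < (cls α).card)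
      have hcx := (hmemcls x α).mp hx
      have hcy := (hmemcls y α).mp hy
      have Dv : Dominates A c v α := hv.2 ▸ (hg v hv.1).2
      have Dv' : Dominates A c v' α := hv'.2 ▸ (hg v' hv'.1).2
      have s1 := hshape v x (Dv.2 x hcx)
      have s2 := hshape v y (Dv.2 y hcy)
      have s3 := hshape v' x (Dv'.2 x hcx)
      have s4 := hshape v' y (Dv'.2 y hcy)
      have nxy : (x : ℕ) ≠ (y : ℕ) := fun h' => hxy (Fin.val_injective h')
      exact Fin.val_injective (by omega)
    · by_contra hcon
      push_neg at hcon
      obtain ⟨v1, v2, v3, m1, m2, m3, ne12, ne13, ne23⟩ := Finset.two_lt_card_iff.mp hcon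
      rw [Finset.mem_filter] at m1 m2 m3
      obtain ⟨vd, hvd⟩ := (hmemD α).mp hαD
      obtain ⟨w, hw⟩ := hvd.1
      have D1 : Dominates A c v1 α := m1.2 ▸ (hg v1 m1.1).2
      have D2 : Dominates A c v2 α := m2.2 ▸ (hg v2 m2.1).2
      have D3 : Dominates A c v3 α := m3.2 ▸ (hg v3 m3.1).2
      have s1 := hshape v1 w (D1.2 w hw)
      have s2 := hshape v2 w (D2.2 w hw)
      have s3 := hshape v3 w (D3.2 w hw)
      have n12 : (v1 : ℕ) ≠ (v2 : ℕ) := fun h' => ne12 (Fin.val_injective h')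
      have n13 : (v1 : ℕ) ≠ (v3 : ℕ) := fun h' => ne13 (Fin.val_injective h')
      have n23 : (v2 : ℕ) ≠ (v3 : ℕ) := fun h' => ne23 (Fin.val_injective h')
      omega
  have hNle : N.card ≤ 2 * D.card - p2 := by
    have h1 : N.card ≤ ∑ α ∈ D, (if (cls α).card = 2 then 1 else 2) := by
      rw [hNsum]
      exact Finset.sum_le_sum hfibN
    have h2 : ∑ α ∈ D, (if (cls α).card = 2 then 1 else 2) = 2 * D.card - p2 := by
      rw [← Finset.sum_filter_add_sum_filter_not D (fun a => (cls a).card = 2)]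
      have e1 : ∑ α ∈ D.filter (fun a => (cls a).card = 2),
          (if (cls α).card = 2 then 1 else 2)
          = (D.filter (fun a => (cls a).card = 2)).card := by
        rw [Finset.sum_congr rfl (fun α hα => if_pos (Finset.mem_filter.mp hα).2)]
        rw [Finset.sum_const, smul_eq_mul, mul_one]
      have e2 : ∑ α ∈ D.filter (fun a => ¬ (cls a).card = 2),
          (if (cls α).card = 2 then 1 else 2)
          = 2 * (D.filter (fun a => ¬ (cls a).card = 2)).card := by
        rw [Finset.sum_congr rfl (fun α hα => if_neg (Finset.mem_filter.mp hα).2)]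
        rw [Finset.sum_const, smul_eq_mul, mul_comm]
      have hsplit := Finset.card_filter_add_card_filter_not
        (s := D) (p := fun a => (cls a).card = 2)
      rw [e1, e2]
      omega
    omega
  -- sinks
  set S : Finset (Fin (4 * k + 3)) := univ \ N with hS
  have hScard : N.card + S.card = 4 * k + 3 := by
    have hn := Finset.card_le_card (Finset.subset_univ N)
    rw [hS, Finset.card_sdiff_of_subset (Finset.subset_univ N)]
    simp only [Finset.card_univ, Fintype.card_fin] at hn ⊢
    omega
  have hSindep : ∀ u ∈ S, ∀ v ∈ S, (u : ℕ) + 1 ≠ (v : ℕ) := by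
    intro u hu v hv h
    rcases harc u v h with h' | h'
    · exact (Finset.mem_sdiff.mp hu).2 ((hmemN u).mpr ⟨v, h'⟩)
    · exact (Finset.mem_sdiff.mp hv).2 ((hmemN v).mpr ⟨u, h'⟩)
  have hBindep : ∀ u ∈ B, ∀ v ∈ B, (u : ℕ) + 1 ≠ (v : ℕ) := by
    intro u hu v hv h
    have hcu : c u = c u0 := (hmemcls u (c u0)).mp (hB ▸ hu)
    have hcv : c v = c u0 := (hmemcls v (c u0)).mp (hB ▸ hv)
    rcases harc u v h with h' | h'
    · exact hc.1 u v h' (by rw [hcu, hcv])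
    · exact hc.1 v u h' (by rw [hcu, hcv])
  have hSle := indep_card_le hSindep
  have hBle := indep_card_le hBindep
  -- the crucial counting : k = 1 and p2 = 1
  have hkp : k = 1 ∧ p2 = 1 := by omega
  obtain ⟨hk1, hp21⟩ := hkp
  subst hk1
  -- endgame for k = 1
  have hScard4 : S.card = 4 := by omega
  have hBcard4 : B.card = 4 := by omega
  have hSeven : ∀ v ∈ S, (v : ℕ) % 2 = 0 := by
    intro v hv
    by_contra hodd
    have := indep_card_le_odd hSindep hv (by omega)
    omega
  have hBeven : ∀ v ∈ B, (v : ℕ) % 2 = 0 := by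
    intro v hv
    by_contra hodd
    have := indep_card_le_odd hBindep hv (by omega)
    omega
  have hE : (univ.filter (fun v : Fin (4 * 1 + 3) => (v : ℕ) % 2 = 0)).card = 4 := by decide
  have hSE : S = univ.filter (fun v : Fin (4 * 1 + 3) => (v : ℕ) % 2 = 0) := by
    apply Finset.eq_of_subset_of_card_le
    · intro v hv
      exact Finset.mem_filter.mpr ⟨Finset.mem_univ v, hSeven v hv⟩
    · omega
  have hVDeven : ∀ w ∈ VD, (w : ℕ) % 2 = 0 := by
    intro w hw
    have hw' : w ∈ univ.filter (fun w => c w ∈ D) := hVD ▸ hw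
    have hcwD : c w ∈ D := (Finset.mem_filter.mp hw').2
    obtain ⟨v, hv⟩ := (hmemD (c w)).mp hcwD
    have harc' := hv.2 w rfl
    have hvN : v ∈ N := (hmemN v).mpr ⟨w, harc'⟩
    have hvS : v ∉ S := fun hvs => (Finset.mem_sdiff.mp hvs).2 hvN
    have hvE : v ∉ univ.filter (fun v : Fin (4 * 1 + 3) => (v : ℕ) % 2 = 0) := hSE ▸ hvS
    have hvodd : (v : ℕ) % 2 = 1 := by
      by_contra hcon
      exact hvE (Finset.mem_filter.mpr ⟨Finset.mem_univ v, by omega⟩)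
    have := hshape v w harc'
    omega
  have hall : ∀ w : Fin (4 * 1 + 3), (w : ℕ) % 2 = 0 := by
    intro w
    by_cases hD' : c w ∈ D
    · exact hVDeven w (Finset.mem_filter.mpr ⟨Finset.mem_univ w, hD'⟩)
    · exact hBeven w ((hBmem w).mpr hD')
  have hone := hall ⟨1, by omega⟩
  simp at hone

private def goodO : ℕ → Bool := fun j => j % 2 == 0

private def ubColor (k : ℕ) (v : Fin (4 * k + 3)) : Fin (k + 3) :=
  ⟨if (v : ℕ) % 4 = 1 then (v : ℕ) / 4 else if (v : ℕ) % 2 = 1 then k + 1 else k + 2, by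
    have := v.isLt; split_ifs <;> omega⟩

private lemma ubColor_val (k : ℕ) (v : Fin (4 * k + 3)) :
    (ubColor k v : ℕ)
      = if (v : ℕ) % 4 = 1 then (v : ℕ) / 4 else if (v : ℕ) % 2 = 1 then k + 1 else k + 2 :=
  rfl

private lemma ub (k : ℕ) : IsDominatorColoring (pathArc (4 * k + 3) goodO) (ubColor k) := by
  constructor
  · rintro u v (⟨h1, h2⟩ | ⟨h1, h2⟩) hcc <;>
    · have hval := congrArg Fin.val hcc
      rw [ubColor_val, ubColor_val] at hval
      have hub := u.isLt
      have hvb := v.isLt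
      have hpar : (u : ℕ) % 2 = 0 ∨ (v : ℕ) % 2 ≠ 0 := by
        first
        | exact Or.inl (by simpa [goodO] using h2)
        | exact Or.inr (by simpa [goodO] using h2)
      split_ifs at hval <;> omega
  · intro v hv
    have hvb := v.isLt
    have hv2 : (v : ℕ) % 2 = 0 := by
      obtain ⟨w, hw⟩ := hv
      rcases hw with ⟨h1, h2⟩ | ⟨h1, h2⟩
      · simpa [goodO] using h2
      · have hwodd : ¬ (w : ℕ) % 2 = 0 := by simpa [goodO] using h2
        omega
    rcases (by omega : (v : ℕ) % 4 = 0 ∨ (v : ℕ) % 4 = 2) with hv4 | hv4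
    · have hlt : (v : ℕ) + 1 < 4 * k + 3 := by omega
      refine ⟨ubColor k ⟨(v : ℕ) + 1, hlt⟩, ⟨⟨(v : ℕ) + 1, hlt⟩, rfl⟩, ?_⟩
      intro x hx
      have hxval := congrArg Fin.val hx
      rw [ubColor_val, ubColor_val] at hxval
      simp only [Fin.val_mk] at hxval
      have hxb := x.isLt
      have hx1 : (x : ℕ) = (v : ℕ) + 1 := by
        split_ifs at hxval <;> omega
      exact Or.inl ⟨by omega, by simp only [goodO, beq_iff_eq]; exact hv2⟩
    · have hlt : (v : ℕ) - 1 < 4 * k + 3 := by omega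
      refine ⟨ubColor k ⟨(v : ℕ) - 1, hlt⟩, ⟨⟨(v : ℕ) - 1, hlt⟩, rfl⟩, ?_⟩
      intro x hx
      have hxval := congrArg Fin.val hx
      rw [ubColor_val, ubColor_val] at hxval
      simp only [Fin.val_mk] at hxval
      have hxb := x.isLt
      have hx1 : (x : ℕ) = (v : ℕ) - 1 := by
        split_ifs at hxval <;> omega
      refine Or.inr ⟨by omega, ?_⟩
      simp only [goodO, beq_eq_false_iff_ne, ne_eq]
      omega

private lemma id_col (n : ℕ) (o : ℕ → Bool) :
    ∃ c : Fin n → Fin n, IsDominatorColoring (pathArc n o) c := by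
  refine ⟨id, ?_, ?_⟩
  · rintro u v (⟨h, -⟩ | ⟨h, -⟩) hcc <;>
    · have h2 : (u : ℕ) = (v : ℕ) := congrArg Fin.val hcc
      omega
  · intro v hv
    obtain ⟨w, hw⟩ := hv
    refine ⟨w, ⟨w, rfl⟩, ?_⟩
    intro x hx
    have : x = w := hx
    rw [this]
    exact hw

theorem min_domChrom_orientations_of_path_four_k_add_three (k : ℕ) (hk : 1 ≤ k) :
    minDomChromPath (4 * k + 3) = k + 3 := by
  have hlb : ∀ o : ℕ → Bool, k + 3 ≤ domChrom (pathArc (4 * k + 3) o) := by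
    intro o
    have hne : {κ | ∃ c : Fin (4 * k + 3) → Fin κ,
        IsDominatorColoring (pathArc (4 * k + 3) o) c}.Nonempty :=
      ⟨4 * k + 3, id_col (4 * k + 3) o⟩
    have hmem := Nat.sInf_mem hne
    obtain ⟨c, hc⟩ := hmem
    rw [domChrom]
    by_contra hcon
    push_neg at hcon
    exact abstract_lb hk (by omega) (pathArc_total o) (pathArc_shape o) c hc
  have hO : domChrom (pathArc (4 * k + 3) goodO) = k + 3 := by
    have h1 : domChrom (pathArc (4 * k + 3) goodO) ≤ k + 3 :=
      Nat.sInf_le ⟨ubColor k, ub k⟩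
    exact le_antisymm h1 (hlb goodO)
  have hmemM : k + 3 ∈ {m | ∃ o : ℕ → Bool, m = domChrom (pathArc (4 * k + 3) o)} :=
    ⟨goodO, hO.symm⟩
  rw [minDomChromPath]
  refine le_antisymm (Nat.sInf_le hmemM) ?_
  obtain ⟨o, ho⟩ := Nat.sInf_mem (⟨k + 3, hmemM⟩ :
    Set.Nonempty {m | ∃ o : ℕ → Bool, m = domChrom (pathArc (4 * k + 3) o)})
  rw [ho]
  exact hlb o
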